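/- Let m ≥ 1, let R be a fixed m×m real matrix, and let ε > 0. Let U : ℝ → Matrix(m,m,ℝ) be differentiable on the interval (0,ε) and satisfy the Riccati equation U'(r) + U(r)² + R = 0 for all r ∈ (0,ε). Suppose that there exist m×m real matrices A and B such that U(r) = r⁻¹·I + A + r·B + o(r) as r → 0⁺ (i.e., (U(r) - r⁻¹·I - A - r·B)/r → 0 as r → 0⁺, where I is the identity matrix). Then A = 0 and B = -(1/3)·R. -/

import Mathlib

open Filter Set

/-- MVT-based bound: if `g' = h` on `(0,δ)`, `g → 0` at `0⁺`, and `|h r| ≤ C r²`,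
then `|g r| ≤ C r³` on `(0,δ)`. -/
private lemma riccati_key_mvt (g h : ℝ → ℝ) (C δ : ℝ)
    (hd : ∀ r ∈ Ioo (0:ℝ) δ, HasDerivAt g (h r) r)
    (hg0 : Tendsto g (nhdsWithin 0 (Ioi 0)) (nhds 0))
    (hb : ∀ r ∈ Ioo (0:ℝ) δ, |h r| ≤ C * r^2) :
    ∀ r ∈ Ioo (0:ℝ) δ, |g r| ≤ C * r^3 := by
  intro r hr
  have hrpos : (0:ℝ) < r := hr.1
  have hC : 0 ≤ C := by
    have h0 := hb r hr
    nlinarith [abs_nonneg (h r), pow_pos hrpos 2]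
  have step : ∀ x ∈ Ioo (0:ℝ) r, |g r - g x| ≤ C * r^3 := by
    intro x hx
    have hsub : Icc x r ⊆ Ioo 0 δ := fun y hy =>
      ⟨lt_of_lt_of_le hx.1 hy.1, lt_of_le_of_lt hy.2 hr.2⟩
    have hderivW : ∀ y ∈ Icc x r, HasDerivWithinAt g (h y) (Icc x r) y :=
      fun y hy => (hd y (hsub hy)).hasDerivWithinAt
    have hbnd : ∀ y ∈ Icc x r, ‖h y‖ ≤ C * r^2 := by
      intro y hy
      have h1 := hb y (hsub hy)
      have hy0 : 0 < y := (hsub hy).1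
      have hyr : y ≤ r := hy.2
      have hyy : y^2 ≤ r^2 := by nlinarith
      have : |h y| ≤ C * r ^ 2 := h1.trans (mul_le_mul_of_nonneg_left hyy hC)
      simpa [Real.norm_eq_abs] using this
    have hmvt := Convex.norm_image_sub_le_of_norm_hasDerivWithin_le hderivW hbnd
      (convex_Icc x r) (left_mem_Icc.mpr (le_of_lt hx.2)) (right_mem_Icc.mpr (le_of_lt hx.2))
    have hxr : ‖r - x‖ = r - x := by
      rw [Real.norm_eq_abs, abs_of_nonneg]; linarith [hx.2]
    rw [Real.norm_eq_abs, hxr] at hmvt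
    calc |g r - g x| ≤ C * r^2 * (r - x) := hmvt
      _ ≤ C * r^3 := by nlinarith [mul_nonneg (mul_nonneg hC (sq_nonneg r)) hx.1.le]
  have hlim : Tendsto (fun x => |g r - g x|) (nhdsWithin 0 (Ioi 0)) (nhds |g r|) := by
    have h1 : Tendsto (fun x => g r - g x) (nhdsWithin 0 (Ioi 0)) (nhds (g r - 0)) :=
      tendsto_const_nhds.sub hg0
    simpa using h1.abs
  have hev : ∀ᶠ x in nhdsWithin (0:ℝ) (Ioi 0), |g r - g x| ≤ C * r^3 := by
    filter_upwards [Ioo_mem_nhdsGT_of_mem (⟨le_refl 0, hrpos⟩ : (0:ℝ) ∈ Ico 0 r)] with x hx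
    exact step x hx
  exact le_of_tendsto hlim hev

/-- Derivative computation for `g(r) = r² U(r)ᵢⱼ - r δᵢⱼ` from the Riccati equation. -/
private lemma riccati_deriv_g {m : ℕ} (R : Matrix (Fin m) (Fin m) ℝ) (ε : ℝ)
    (U U' : ℝ → Matrix (Fin m) (Fin m) ℝ)
    (hderiv : ∀ r ∈ Ioo (0:ℝ) ε, ∀ i j, HasDerivAt (fun s => U s i j) (U' r i j) r)
    (hriccati : ∀ r ∈ Ioo (0:ℝ) ε, U' r + U r * U r + R = 0)
    (i j : Fin m) (r : ℝ) (hr : r ∈ Ioo (0:ℝ) ε) :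
    HasDerivAt (fun s => s^2 * U s i j - s * (1 : Matrix (Fin m) (Fin m) ℝ) i j)
      (-(r^2 * ((∑ k, (U r i k - r⁻¹ * (1 : Matrix (Fin m) (Fin m) ℝ) i k) *
          (U r k j - r⁻¹ * (1 : Matrix (Fin m) (Fin m) ℝ) k j)) + R i j))) r := by
  have hrne : r ≠ 0 := ne_of_gt hr.1
  have hU' : U' r i j = -((U r * U r) i j + R i j) := by
    have h0 := hriccati r hr
    have h1 : (U' r + U r * U r + R) i j = (0 : Matrix (Fin m) (Fin m) ℝ) i j := by rw [h0]
    simp only [Matrix.add_apply, Matrix.zero_apply] at h1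
    linarith
  have hd := ((hasDerivAt_pow 2 r).mul (hderiv r hr i j)).sub
      ((hasDerivAt_id r).mul_const ((1 : Matrix (Fin m) (Fin m) ℝ) i j))
  refine hd.congr_deriv ?_
  have e1 : (∑ k, U r i k * (1 : Matrix (Fin m) (Fin m) ℝ) k j) = U r i j := by
    rw [← Matrix.mul_apply, Matrix.mul_one]
  have e2 : (∑ k, (1 : Matrix (Fin m) (Fin m) ℝ) i k * U r k j) = U r i j := by
    rw [← Matrix.mul_apply, Matrix.one_mul]
  have e3 : (∑ k, (1 : Matrix (Fin m) (Fin m) ℝ) i k * (1 : Matrix (Fin m) (Fin m) ℝ) k j)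
      = (1 : Matrix (Fin m) (Fin m) ℝ) i j := by
    rw [← Matrix.mul_apply, Matrix.one_mul]
  have e4 : (U r * U r) i j = ∑ k, U r i k * U r k j := Matrix.mul_apply
  have expand : (∑ k, (U r i k - r⁻¹ * (1 : Matrix (Fin m) (Fin m) ℝ) i k) *
        (U r k j - r⁻¹ * (1 : Matrix (Fin m) (Fin m) ℝ) k j))
      = (∑ k, U r i k * U r k j)
        - r⁻¹ * (∑ k, U r i k * (1 : Matrix (Fin m) (Fin m) ℝ) k j)
        - r⁻¹ * (∑ k, (1 : Matrix (Fin m) (Fin m) ℝ) i k * U r k j)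
        + r⁻¹ * r⁻¹ * (∑ k, (1 : Matrix (Fin m) (Fin m) ℝ) i k *
            (1 : Matrix (Fin m) (Fin m) ℝ) k j) := by
    rw [Finset.mul_sum, Finset.mul_sum, Finset.mul_sum, ← Finset.sum_sub_distrib,
      ← Finset.sum_sub_distrib, ← Finset.sum_add_distrib]
    exact Finset.sum_congr rfl (fun k _ => by ring)
  rw [expand, e1, e2, e3, hU', e4]
  field_simp
  ring

theorem riccati_shape_operator_expansion
    (m : ℕ) (hm : 1 ≤ m) (R : Matrix (Fin m) (Fin m) ℝ) (ε : ℝ) (hε : 0 < ε)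
    (U U' : ℝ → Matrix (Fin m) (Fin m) ℝ)
    (hderiv : ∀ r ∈ Ioo (0:ℝ) ε, ∀ i j, HasDerivAt (fun s => U s i j) (U' r i j) r)
    (hriccati : ∀ r ∈ Ioo (0:ℝ) ε, U' r + U r * U r + R = 0)
    (A B : Matrix (Fin m) (Fin m) ℝ)
    (hexp : ∀ i j, Tendsto
      (fun r : ℝ =>
        (U r i j - (r⁻¹ • (1 : Matrix (Fin m) (Fin m) ℝ) + A + r • B) i j) / r)
      (nhdsWithin 0 (Ioi 0)) (nhds 0)) :
    A = 0 ∧ B = -(1 / 3 : ℝ) • R := by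
  have hid : Tendsto (fun r : ℝ => r) (nhdsWithin 0 (Ioi 0)) (nhds 0) :=
    tendsto_id.mono_right nhdsWithin_le_nhds
  -- V entries tend to A entries
  have hvA : ∀ i j, Tendsto (fun r : ℝ => U r i j - r⁻¹ * (1 : Matrix (Fin m) (Fin m) ℝ) i j)
      (nhdsWithin 0 (Ioi 0)) (nhds (A i j)) := by
    intro i j
    have h1 := hexp i j
    simp only [Matrix.add_apply, Matrix.smul_apply, smul_eq_mul] at h1
    have h2 : Tendsto (fun r : ℝ => r * ((U r i j -
        (r⁻¹ * (1 : Matrix (Fin m) (Fin m) ℝ) i j + A i j + r * B i j)) / r))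
        (nhdsWithin 0 (Ioi 0)) (nhds 0) := by
      simpa using hid.mul h1
    have h3 : Tendsto (fun r : ℝ => U r i j -
        (r⁻¹ * (1 : Matrix (Fin m) (Fin m) ℝ) i j + A i j + r * B i j))
        (nhdsWithin 0 (Ioi 0)) (nhds 0) := by
      apply h2.congr'
      filter_upwards [self_mem_nhdsWithin] with r hr
      have hrne : r ≠ 0 := ne_of_gt hr
      field_simp
    have h5 : Tendsto (fun r : ℝ => A i j + r * B i j) (nhdsWithin 0 (Ioi 0))
        (nhds (A i j)) := by
      have := tendsto_const_nhds (x := A i j) (f := nhdsWithin (0:ℝ) (Ioi 0))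
      simpa using this.add (hid.mul tendsto_const_nhds)
    have h6 : Tendsto (fun r : ℝ => U r i j - r⁻¹ * (1 : Matrix (Fin m) (Fin m) ℝ) i j)
        (nhdsWithin 0 (Ioi 0)) (nhds (0 + A i j)) := (h3.add h5).congr (fun r => by ring)
    simpa using h6
  -- g entries tend to 0
  have hg0 : ∀ i j, Tendsto (fun r : ℝ => r^2 * U r i j - r * (1 : Matrix (Fin m) (Fin m) ℝ) i j)
      (nhdsWithin 0 (Ioi 0)) (nhds 0) := by
    intro i j
    have h2 : Tendsto (fun r : ℝ => r^2 *
        (U r i j - r⁻¹ * (1 : Matrix (Fin m) (Fin m) ℝ) i j))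
        (nhdsWithin 0 (Ioi 0)) (nhds 0) := by
      have hr2 : Tendsto (fun r : ℝ => r^2) (nhdsWithin 0 (Ioi 0)) (nhds 0) := by
        simpa [pow_succ, pow_zero, one_mul] using hid.mul hid
      simpa using hr2.mul (hvA i j)
    apply h2.congr'
    filter_upwards [self_mem_nhdsWithin] with r hr
    have hrne : r ≠ 0 := ne_of_gt hr
    field_simp
  -- S entries tend to (A*A) entries
  have hS : ∀ i j, Tendsto (fun r : ℝ =>
      ∑ k, (U r i k - r⁻¹ * (1 : Matrix (Fin m) (Fin m) ℝ) i k) *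
        (U r k j - r⁻¹ * (1 : Matrix (Fin m) (Fin m) ℝ) k j))
      (nhdsWithin 0 (Ioi 0)) (nhds ((A * A) i j)) := by
    intro i j
    rw [Matrix.mul_apply]
    exact tendsto_finset_sum _ (fun k _ => (hvA i k).mul (hvA k j))
  -- Step 1 : A = 0
  have hA : A = 0 := by
    ext i j
    simp only [Matrix.zero_apply]
    have hSR := ((hS i j).add (tendsto_const_nhds (x := R i j))).abs
    set C : ℝ := |(A * A) i j + R i j| + 1 with hCdef
    have hev : ∀ᶠ r in nhdsWithin (0:ℝ) (Ioi 0),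
        |(∑ k, (U r i k - r⁻¹ * (1 : Matrix (Fin m) (Fin m) ℝ) i k) *
          (U r k j - r⁻¹ * (1 : Matrix (Fin m) (Fin m) ℝ) k j)) + R i j| ≤ C := by
      filter_upwards [hSR.eventually_lt_const (lt_add_one _)] with r hr using le_of_lt hr
    obtain ⟨u, hu, hsub⟩ := mem_nhdsGT_iff_exists_Ioo_subset.mp hev
    set δ : ℝ := min u ε with hδdef
    have hδ : 0 < δ := lt_min hu hε
    have hder : ∀ r ∈ Ioo (0:ℝ) δ,
        HasDerivAt (fun s => s^2 * U s i j - s * (1 : Matrix (Fin m) (Fin m) ℝ) i j)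
          (-(r^2 * ((∑ k, (U r i k - r⁻¹ * (1 : Matrix (Fin m) (Fin m) ℝ) i k) *
            (U r k j - r⁻¹ * (1 : Matrix (Fin m) (Fin m) ℝ) k j)) + R i j))) r :=
      fun r hr => riccati_deriv_g R ε U U' hderiv hriccati i j r
        ⟨hr.1, lt_of_lt_of_le hr.2 (min_le_right u ε)⟩
    have hbd : ∀ r ∈ Ioo (0:ℝ) δ,
        |(-(r^2 * ((∑ k, (U r i k - r⁻¹ * (1 : Matrix (Fin m) (Fin m) ℝ) i k) *
          (U r k j - r⁻¹ * (1 : Matrix (Fin m) (Fin m) ℝ) k j)) + R i j)))| ≤ C * r^2 := by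
      intro r hr
      have h1 := hsub ⟨hr.1, lt_of_lt_of_le hr.2 (min_le_left u ε)⟩
      rw [abs_neg, abs_mul, abs_of_nonneg (sq_nonneg r)]
      calc r^2 * |(∑ k, (U r i k - r⁻¹ * (1 : Matrix (Fin m) (Fin m) ℝ) i k) *
            (U r k j - r⁻¹ * (1 : Matrix (Fin m) (Fin m) ℝ) k j)) + R i j|
          ≤ r^2 * C := mul_le_mul_of_nonneg_left h1 (sq_nonneg r)
        _ = C * r^2 := by ring
    have hkey := riccati_key_mvt _ _ C δ hder (hg0 i j) hbd
    have hv0 : Tendsto (fun r : ℝ => U r i j - r⁻¹ * (1 : Matrix (Fin m) (Fin m) ℝ) i j)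
        (nhdsWithin 0 (Ioi 0)) (nhds 0) := by
      apply squeeze_zero_norm' (a := fun r : ℝ => C * r)
      · filter_upwards [Ioo_mem_nhdsGT_of_mem (⟨le_refl 0, hδ⟩ : (0:ℝ) ∈ Ico 0 δ)] with r hr
        have h3 := hkey r hr
        have hrpos : (0:ℝ) < r := hr.1
        have hrne : r ≠ 0 := ne_of_gt hrpos
        have hg : r^2 * U r i j - r * (1 : Matrix (Fin m) (Fin m) ℝ) i j
            = r^2 * (U r i j - r⁻¹ * (1 : Matrix (Fin m) (Fin m) ℝ) i j) := by
          field_simp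
        rw [hg, abs_mul, abs_of_nonneg (sq_nonneg r)] at h3
        have : |U r i j - r⁻¹ * (1 : Matrix (Fin m) (Fin m) ℝ) i j| ≤ C * r := by
          nlinarith [pow_pos hrpos 2]
        simpa [Real.norm_eq_abs] using this
      · simpa using (tendsto_const_nhds (x := C)).mul hid
    exact tendsto_nhds_unique (hvA i j) hv0
  -- Step 2 : B = -(1/3) R
  refine ⟨hA, ?_⟩
  ext i j
  have hv0 : ∀ i' j', Tendsto (fun r : ℝ =>
      U r i' j' - r⁻¹ * (1 : Matrix (Fin m) (Fin m) ℝ) i' j')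
      (nhdsWithin 0 (Ioi 0)) (nhds 0) := by
    intro i' j'
    have := hvA i' j'
    rw [hA] at this
    simpa using this
  have hS0 : Tendsto (fun r : ℝ =>
      ∑ k, (U r i k - r⁻¹ * (1 : Matrix (Fin m) (Fin m) ℝ) i k) *
        (U r k j - r⁻¹ * (1 : Matrix (Fin m) (Fin m) ℝ) k j))
      (nhdsWithin 0 (Ioi 0)) (nhds 0) := by
    have := hS i j
    rw [hA] at this
    simpa using this
  -- v r / r → B i j
  have hvB : Tendsto (fun r : ℝ =>
      (U r i j - r⁻¹ * (1 : Matrix (Fin m) (Fin m) ℝ) i j) / r)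
      (nhdsWithin 0 (Ioi 0)) (nhds (B i j)) := by
    have h1 := hexp i j
    simp only [Matrix.add_apply, Matrix.smul_apply, smul_eq_mul, hA, Matrix.zero_apply] at h1
    have h2 := h1.add (tendsto_const_nhds (x := B i j))
    rw [zero_add] at h2
    apply h2.congr'
    filter_upwards [self_mem_nhdsWithin] with r hr
    have hrne : r ≠ 0 := ne_of_gt hr
    field_simp
    ring
  have hfinal : ∀ η > (0:ℝ), |B i j + R i j / 3| ≤ η := by
    intro η hη
    have hev : ∀ᶠ r in nhdsWithin (0:ℝ) (Ioi 0),
        |∑ k, (U r i k - r⁻¹ * (1 : Matrix (Fin m) (Fin m) ℝ) i k) *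
          (U r k j - r⁻¹ * (1 : Matrix (Fin m) (Fin m) ℝ) k j)| ≤ η := by
      have := hS0.abs
      rw [abs_zero] at this
      filter_upwards [this.eventually_lt_const hη] with r hr using le_of_lt hr
    obtain ⟨u, hu, hsub⟩ := mem_nhdsGT_iff_exists_Ioo_subset.mp hev
    set δ : ℝ := min u ε with hδdef
    have hδ : 0 < δ := lt_min hu hε
    have hder2 : ∀ r ∈ Ioo (0:ℝ) δ,
        HasDerivAt (fun s => s^2 * U s i j - s * (1 : Matrix (Fin m) (Fin m) ℝ) i j
            + s^3 * (R i j / 3))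
          (-(r^2 * ((∑ k, (U r i k - r⁻¹ * (1 : Matrix (Fin m) (Fin m) ℝ) i k) *
            (U r k j - r⁻¹ * (1 : Matrix (Fin m) (Fin m) ℝ) k j))))) r := by
      intro r hr
      have hrε : r ∈ Ioo (0:ℝ) ε := ⟨hr.1, lt_of_lt_of_le hr.2 (min_le_right u ε)⟩
      have hd1 := riccati_deriv_g R ε U U' hderiv hriccati i j r hrε
      have hd2 := (hasDerivAt_pow 3 r).mul_const (R i j / 3)
      have := hd1.add hd2
      refine this.congr_deriv ?_
      push_cast
      ring
    have hbd2 : ∀ r ∈ Ioo (0:ℝ) δ,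
        |(-(r^2 * ((∑ k, (U r i k - r⁻¹ * (1 : Matrix (Fin m) (Fin m) ℝ) i k) *
          (U r k j - r⁻¹ * (1 : Matrix (Fin m) (Fin m) ℝ) k j)))))| ≤ η * r^2 := by
      intro r hr
      have h1 := hsub ⟨hr.1, lt_of_lt_of_le hr.2 (min_le_left u ε)⟩
      rw [abs_neg, abs_mul, abs_of_nonneg (sq_nonneg r)]
      calc r^2 * |∑ k, (U r i k - r⁻¹ * (1 : Matrix (Fin m) (Fin m) ℝ) i k) *
            (U r k j - r⁻¹ * (1 : Matrix (Fin m) (Fin m) ℝ) k j)|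
          ≤ r^2 * η := mul_le_mul_of_nonneg_left h1 (sq_nonneg r)
        _ = η * r^2 := by ring
    have hg2 : Tendsto (fun r : ℝ => r^2 * U r i j - r * (1 : Matrix (Fin m) (Fin m) ℝ) i j
        + r^3 * (R i j / 3)) (nhdsWithin 0 (Ioi 0)) (nhds 0) := by
      have hr3 : Tendsto (fun r : ℝ => r^3 * (R i j / 3)) (nhdsWithin 0 (Ioi 0)) (nhds 0) := by
        have hr2 : Tendsto (fun r : ℝ => r^3) (nhdsWithin 0 (Ioi 0)) (nhds 0) := by
          simpa [pow_succ, pow_zero, one_mul] using (hid.mul hid).mul hid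
        simpa using hr2.mul (tendsto_const_nhds (x := R i j / 3))
      simpa using (hg0 i j).add hr3
    have hkey := riccati_key_mvt _ _ η δ hder2 hg2 hbd2
    have hev2 : ∀ᶠ r in nhdsWithin (0:ℝ) (Ioi 0),
        |(U r i j - r⁻¹ * (1 : Matrix (Fin m) (Fin m) ℝ) i j) / r + R i j / 3| ≤ η := by
      filter_upwards [Ioo_mem_nhdsGT_of_mem (⟨le_refl 0, hδ⟩ : (0:ℝ) ∈ Ico 0 δ)] with r hr
      have h3 := hkey r hr
      have hrpos : (0:ℝ) < r := hr.1
      have hrne : r ≠ 0 := ne_of_gt hrpos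
      have heq : (U r i j - r⁻¹ * (1 : Matrix (Fin m) (Fin m) ℝ) i j) / r + R i j / 3
          = (r^2 * U r i j - r * (1 : Matrix (Fin m) (Fin m) ℝ) i j + r^3 * (R i j / 3)) / r^3 := by
        field_simp
      rw [heq, abs_div, abs_of_pos (pow_pos hrpos 3), div_le_iff₀ (pow_pos hrpos 3)]
      linarith [h3]
    have hlim2 : Tendsto (fun r : ℝ =>
        |(U r i j - r⁻¹ * (1 : Matrix (Fin m) (Fin m) ℝ) i j) / r + R i j / 3|)
        (nhdsWithin 0 (Ioi 0)) (nhds (|B i j + R i j / 3|)) :=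
      (hvB.add tendsto_const_nhds).abs
    exact le_of_tendsto hlim2 hev2
  have habs : |B i j + R i j / 3| = 0 := by
    by_contra hne
    have hpos : 0 < |B i j + R i j / 3| := lt_of_le_of_ne (abs_nonneg _) (Ne.symm hne)
    have := hfinal (|B i j + R i j / 3| / 2) (by linarith)
    linarith
  have hBij := abs_eq_zero.mp habs
  simp only [Matrix.smul_apply, Matrix.neg_apply, smul_eq_mul, neg_mul]
  linarith
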